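/- arXiv:1005.3818 — 2 statements merged into one kernel-verified Lean document; each statement's English description precedes it below -/
import Mathlib

section
/- The unit resource achievable region is exactly an intersection of three half-spaces: a vector (R,P,S) ∈ ℝ³ can be written as α·(0,-1,1) + β·(-1,1,-1) + γ·(1,-1,0) for some nonnegative reals α, β, γ if and only if R + P ≤ 0, P + S ≤ 0, and R + P + S ≤ 0. -/
/-- The unit resource achievable region (the cone generated by the rate
triples of secret key distribution `(0,-1,1)`, the one-time pad `(-1,1,-1)`,
and private-to-public transmission `(1,-1,0)`) is exactly the intersection of
the three half-spaces `R + P ≤ 0`, `P + S ≤ 0`, `R + P + S ≤ 0`. -/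
theorem unit_resource_region_characterization (R P S : ℝ) :
    (∃ α β γ : ℝ, 0 ≤ α ∧ 0 ≤ β ∧ 0 ≤ γ ∧
      (![R, P, S] : Fin 3 → ℝ) =
        α • (![0, -1, 1] : Fin 3 → ℝ) + β • (![-1, 1, -1] : Fin 3 → ℝ) +
          γ • (![1, -1, 0] : Fin 3 → ℝ)) ↔
    (R + P ≤ 0 ∧ P + S ≤ 0 ∧ R + P + S ≤ 0) := by
  constructor
  · rintro ⟨α, β, γ, hα, hβ, hγ, h⟩
    have h0 := congrFun h 0
    have h1 := congrFun h 1
    have h2 := congrFun h 2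
    simp [Pi.add_apply, Pi.smul_apply] at h0 h1 h2
    refine ⟨?_, ?_, ?_⟩ <;> nlinarith
  · rintro ⟨h1, h2, h3⟩
    refine ⟨-(R+P), -(R+P+S), -(P+S), by linarith, by linarith, by linarith, ?_⟩
    funext i
    fin_cases i <;> simp [Pi.add_apply, Pi.smul_apply] <;> ring
end

section
/- For any real numbers a, b, c, the translate of the unit resource cone by (a,b,c) is exactly an intersection of three half-spaces: a vector (R,P,S) ∈ ℝ³ can be written as (a,b,c) + α·(0,-1,1) + β·(-1,1,-1) + γ·(1,-1,0) for some nonnegative reals α, β, γ if and only if R + P ≤ a + b, P + S ≤ b + c, and R + P + S ≤ a + b + c. -/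
/-- For any translation vector `(a,b,c)`, the translate of the unit resource
cone by `(a,b,c)` is exactly the intersection of the three half-spaces
`R + P ≤ a + b`, `P + S ≤ b + c`, `R + P + S ≤ a + b + c`. -/
theorem translated_unit_resource_region_characterization (a b c R P S : ℝ) :
    (∃ α β γ : ℝ, 0 ≤ α ∧ 0 ≤ β ∧ 0 ≤ γ ∧
      (![R, P, S] : Fin 3 → ℝ) =
        (![a, b, c] : Fin 3 → ℝ) + α • (![0, -1, 1] : Fin 3 → ℝ) +
          β • (![-1, 1, -1] : Fin 3 → ℝ) + γ • (![1, -1, 0] : Fin 3 → ℝ)) ↔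
    (R + P ≤ a + b ∧ P + S ≤ b + c ∧ R + P + S ≤ a + b + c) := by
  constructor
  · rintro ⟨α, β, γ, hα, hβ, hγ, h⟩
    have h0 := congrFun h 0
    have h1 := congrFun h 1
    have h2 := congrFun h 2
    simp [Pi.add_apply, Pi.smul_apply] at h0 h1 h2
    refine ⟨by linarith, by linarith, by linarith⟩
  · rintro ⟨h1, h2, h3⟩
    refine ⟨a + b - R - P, a + b + c - R - P - S, b + c - P - S,
      by linarith, by linarith, by linarith, ?_⟩
    funext i
    fin_cases i <;> simp [Pi.add_apply, Pi.smul_apply] <;> ring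
end
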